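/- The map f(Y) = Y^{1/2} (I + Y^{1/2} B R^{−1} Bᵀ Y^{1/2})^{−1} Y^{1/2} on symmetric positive semidefinite n×n matrices is monotone with respect to the Loewner order: for all symmetric positive semidefinite Y₁, Y₂ with Y₁ ⪰ Y₂, one has f(Y₁) ⪰ f(Y₂). -/

import Mathlib

open Matrix Filter Topology

/-- The unique symmetric positive semidefinite square root of a positive
semidefinite real matrix (junk value `0` if the matrix is not PSD). -/
noncomputable def msqrt {d : ℕ} (X : Matrix (Fin d) (Fin d) ℝ) :
    Matrix (Fin d) (Fin d) ℝ :=
  letI := Classical.propDecidable X.PosSemidef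
  if h : X.PosSemidef then
    (h.1.eigenvectorUnitary : Matrix (Fin d) (Fin d) ℝ) *
      diagonal ((↑) ∘ (√·) ∘ h.1.eigenvalues) *
      (star h.1.eigenvectorUnitary : Matrix (Fin d) (Fin d) ℝ)
  else 0

/-- The Frobenius norm of a real square matrix. -/
noncomputable def frob {d : ℕ} (X : Matrix (Fin d) (Fin d) ℝ) : ℝ :=
  Real.sqrt (∑ i, ∑ j, X i j ^ 2)

/-- Data of the mutual information optimal control problem for a discrete-time
linear system `x_{k+1} = A_k x_k + B_k u_k + w_k`. -/
structure LQData (n m : ℕ) where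
  ε : ℝ
  A : ℕ → Matrix (Fin n) (Fin n) ℝ
  B : ℕ → Matrix (Fin n) (Fin m) ℝ
  R : ℕ → Matrix (Fin m) (Fin m) ℝ
  F : Matrix (Fin n) (Fin n) ℝ
  Sw : ℕ → Matrix (Fin n) (Fin n) ℝ
  Sini : Matrix (Fin n) (Fin n) ℝ

namespace LQData

variable {n m : ℕ} (P : LQData n m) (T : ℕ) (Srho : ℕ → Matrix (Fin m) (Fin m) ℝ)

/-- The backward Riccati recursion `Π_k` associated with the prior covariances
`Σ_{ρ_k}`: `Π_T = F` and
`Π_k = A_kᵀ Π_{k+1} A_k − (1/ε) A_kᵀ Π_{k+1} B_k Σ^{1/2} (I + Σ^{1/2} C_k Σ^{1/2})⁻¹ Σ^{1/2} B_kᵀ Π_{k+1} A_k`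
with `C_k = (R_k + B_kᵀ Π_{k+1} B_k)/ε`. -/
noncomputable def Ric (k : ℕ) : Matrix (Fin n) (Fin n) ℝ :=
  if h : T ≤ k then P.F
  else
    let Pk := Ric (k + 1)
    let S := msqrt (Srho k)
    let C := (1 / P.ε) • (P.R k + (P.B k)ᵀ * Pk * P.B k)
    (P.A k)ᵀ * Pk * P.A k -
      (1 / P.ε) • ((P.A k)ᵀ * Pk * P.B k * S * (1 + S * C * S)⁻¹ * S * (P.B k)ᵀ * Pk * P.A k)
termination_by T - k
decreasing_by omega

/-- `C_k = (R_k + B_kᵀ Π_{k+1} B_k)/ε`. -/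
noncomputable def Ck (k : ℕ) : Matrix (Fin m) (Fin m) ℝ :=
  (1 / P.ε) • (P.R k + (P.B k)ᵀ * P.Ric T Srho (k + 1) * P.B k)

/-- `Σ_{Q_k} = ε (R_k + B_kᵀ Π_{k+1} B_k)⁻¹`. -/
noncomputable def SigQ (k : ℕ) : Matrix (Fin m) (Fin m) ℝ :=
  P.ε • (P.R k + (P.B k)ᵀ * P.Ric T Srho (k + 1) * P.B k)⁻¹

/-- Covariance `Σ_{π_k}` of the optimal policy for the fixed prior. -/
noncomputable def SigPi (k : ℕ) : Matrix (Fin m) (Fin m) ℝ :=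
  msqrt (Srho k) * (1 + msqrt (Srho k) * P.Ck T Srho k * msqrt (Srho k))⁻¹ * msqrt (Srho k)

/-- Feedback gain `P_k = −(1/ε) Σ_{π_k} B_kᵀ Π_{k+1} A_k`. -/
noncomputable def Pgain (k : ℕ) : Matrix (Fin m) (Fin n) ℝ :=
  -((1 / P.ε) • (P.SigPi T Srho k * (P.B k)ᵀ * P.Ric T Srho (k + 1) * P.A k))

/-- Forward state covariance recursion under the optimal policy. -/
noncomputable def Sigx : ℕ → Matrix (Fin n) (Fin n) ℝ
  | 0 => P.Sini
  | k + 1 =>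
    (P.A k + P.B k * P.Pgain T Srho k) * Sigx k *
        (P.A k + P.B k * P.Pgain T Srho k)ᵀ +
      P.B k * P.SigPi T Srho k * (P.B k)ᵀ + P.Sw k

/-- The standard LQR Riccati recursion `Π̌_k`. -/
noncomputable def RicLQR (k : ℕ) : Matrix (Fin n) (Fin n) ℝ :=
  if h : T ≤ k then P.F
  else
    let Pk := RicLQR (k + 1)
    (P.A k)ᵀ * Pk * P.A k -
      (P.A k)ᵀ * Pk * P.B k * (P.R k + (P.B k)ᵀ * Pk * P.B k)⁻¹ * (P.B k)ᵀ * Pk * P.A k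
termination_by T - k
decreasing_by omega

/-- `Π̂_k = A_kᵀ ⋯ A_{T−1}ᵀ F A_{T−1} ⋯ A_k`. -/
noncomputable def RicHat (k : ℕ) : Matrix (Fin n) (Fin n) ℝ :=
  if h : T ≤ k then P.F
  else (P.A k)ᵀ * RicHat (k + 1) * P.A k
termination_by T - k
decreasing_by omega

/-- `Σ_{w_{k−1}}` with the convention `Σ_{w_{−1}} := Σ_{x_ini}`. -/
noncomputable def Swm1 (k : ℕ) : Matrix (Fin n) (Fin n) ℝ :=
  if k = 0 then P.Sini else P.Sw (k - 1)

/-- The matrix `M̌_k` from the sufficient condition for stochastic optimal policies. -/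
noncomputable def Mcheck (k : ℕ) : Matrix (Fin m) (Fin m) ℝ :=
  (P.R k + (P.B k)ᵀ * P.RicHat T (k + 1) * P.B k)⁻¹ *
      ((P.B k)ᵀ * P.RicLQR T (k + 1) * P.A k * P.Swm1 k * (P.A k)ᵀ *
        P.RicLQR T (k + 1) * P.B k) *
      (P.R k + (P.B k)ᵀ * P.RicHat T (k + 1) * P.B k)⁻¹ -
    P.ε • (P.R k + (P.B k)ᵀ * P.RicLQR T (k + 1) * P.B k)⁻¹

/-- State covariance under the zero control input. -/
noncomputable def SigxZero : ℕ → Matrix (Fin n) (Fin n) ℝ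
  | 0 => P.Sini
  | k + 1 => P.A k * SigxZero k * (P.A k)ᵀ + P.Sw k

/-- The matrix `M̂_k^zero` from the sufficient condition for deterministic optimal policies. -/
noncomputable def MhatZero (k : ℕ) : Matrix (Fin m) (Fin m) ℝ :=
  (P.R k + (P.B k)ᵀ * P.RicLQR T (k + 1) * P.B k)⁻¹ *
      ((P.B k)ᵀ * P.RicHat T (k + 1) * P.A k * P.SigxZero k * (P.A k)ᵀ *
        P.RicHat T (k + 1) * P.B k) *
      (P.R k + (P.B k)ᵀ * P.RicLQR T (k + 1) * P.B k)⁻¹ -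
    P.ε • (P.R k + (P.B k)ᵀ * P.RicHat T (k + 1) * P.B k)⁻¹


/-- The backward recursion `r_k` for the mean offset:
`r_T = 0` and `r_k = A_k⁻¹ r_{k+1} − Π_k⁻¹ A_kᵀ Π_{k+1} B_k (I + Σ_{ρ_k} C_k)⁻¹ μ_{ρ_k}`. -/
noncomputable def rvec (μ : ℕ → Fin m → ℝ) (k : ℕ) : Fin n → ℝ :=
  if h : T ≤ k then 0
  else
    ((P.A k)⁻¹).mulVec (rvec μ (k + 1)) -
      ((P.Ric T Srho k)⁻¹ * ((P.A k)ᵀ * P.Ric T Srho (k + 1) * P.B k *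
        (1 + Srho k * P.Ck T Srho k)⁻¹)).mulVec (μ k)
termination_by T - k
decreasing_by omega

/-- `Θ_k = ε C_k − ε C_k Σ_{π_k} C_k − (I − C_k Σ_{π_k}) B_kᵀ Π_{k+1} A_k Π_k⁻¹ A_kᵀ Π_{k+1} B_k (I − Σ_{π_k} C_k)`. -/
noncomputable def Theta (k : ℕ) : Matrix (Fin m) (Fin m) ℝ :=
  P.ε • P.Ck T Srho k - P.ε • (P.Ck T Srho k * P.SigPi T Srho k * P.Ck T Srho k) -
    (1 - P.Ck T Srho k * P.SigPi T Srho k) *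
      ((P.B k)ᵀ * P.Ric T Srho (k + 1) * P.A k * (P.Ric T Srho k)⁻¹ *
        ((P.A k)ᵀ * P.Ric T Srho (k + 1) * P.B k)) *
      (1 - P.SigPi T Srho k * P.Ck T Srho k)

end LQData

/-- Extend a `T`-tuple of matrices to a function on `ℕ` (by zero). -/
def extT {m : ℕ} (T : ℕ) (σ : Fin T → Matrix (Fin m) (Fin m) ℝ) :
    ℕ → Matrix (Fin m) (Fin m) ℝ :=
  fun k => if h : k < T then σ ⟨k, h⟩ else 0


/-- Extend a `T`-tuple of vectors to a function on `ℕ` (by zero). -/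
def extV {m : ℕ} (T : ℕ) (μ : Fin T → Fin m → ℝ) : ℕ → Fin m → ℝ :=
  fun k => if h : k < T then μ ⟨k, h⟩ else 0

namespace LQData

variable {n m : ℕ} (P : LQData n m) (T : ℕ)

/-- The reduced objective `J̌` as a function of the `T`-tuple of prior covariances. -/
noncomputable def Jcheck (σ : Fin T → Matrix (Fin m) (Fin m) ℝ) : ℝ :=
  (1 / 2) * ((P.Ric T (extT T σ) 0 * P.Sini).trace +
    ∑ k : Fin T,
      (P.ε * Real.log ((extT T σ k + P.SigQ T (extT T σ) k).det / (P.SigQ T (extT T σ) k).det) +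
        (P.Ric T (extT T σ) (k + 1) * P.Sw k).trace))

/-- `L_k = (Σ_{Q_k} + Σ_{ρ_k})⁻¹`. -/
noncomputable def Lmat (Srho : ℕ → Matrix (Fin m) (Fin m) ℝ) (k : ℕ) :
    Matrix (Fin m) (Fin m) ℝ :=
  (P.SigQ T Srho k + Srho k)⁻¹

/-- `E_k = (1/ε) Σ_{Q_k} B_kᵀ Π_{k+1} A_k`. -/
noncomputable def Emat (Srho : ℕ → Matrix (Fin m) (Fin m) ℝ) (k : ℕ) :
    Matrix (Fin m) (Fin n) ℝ :=
  (1 / P.ε) • (P.SigQ T Srho k * (P.B k)ᵀ * P.Ric T Srho (k + 1) * P.A k)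

/-- `J̌'_k = (ε/2) L_k (Σ_{ρ_k} + Σ_{Q_k} − E_k Σ_{x_k} E_kᵀ) L_k`. -/
noncomputable def Jprime (Srho : ℕ → Matrix (Fin m) (Fin m) ℝ) (k : ℕ) :
    Matrix (Fin m) (Fin m) ℝ :=
  (P.ε / 2) • (P.Lmat T Srho k *
    (Srho k + P.SigQ T Srho k - P.Emat T Srho k * P.Sigx T Srho k * (P.Emat T Srho k)ᵀ) *
    P.Lmat T Srho k)

/-- The alternating-optimization update map `𝒯` on `T`-tuples of prior covariances:
`𝒯(σ)_k = Σ_{π_k} + P_k Σ_{x_k} P_kᵀ`. -/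
noncomputable def Tmap (σ : Fin T → Matrix (Fin m) (Fin m) ℝ) :
    Fin T → Matrix (Fin m) (Fin m) ℝ :=
  fun k =>
    P.SigPi T (extT T σ) k +
      P.Pgain T (extT T σ) k * P.Sigx T (extT T σ) k * (P.Pgain T (extT T σ) k)ᵀ

/-- The objective `J` as a function of the prior means, for fixed prior covariances:
`J(μ) = (1/2)( r_0ᵀ Π_0 r_0 + Σ_k μ_{ρ_k}ᵀ Θ_k μ_{ρ_k} )`. -/
noncomputable def Jmean (Srho : ℕ → Matrix (Fin m) (Fin m) ℝ) (μ : Fin T → Fin m → ℝ) : ℝ :=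
  (1 / 2) *
    (P.rvec T Srho (extV T μ) 0 ⬝ᵥ (P.Ric T Srho 0).mulVec (P.rvec T Srho (extV T μ) 0) +
      ∑ k : Fin T, μ k ⬝ᵥ (P.Theta T Srho k).mulVec (μ k))

end LQData

open Matrix Filter Topology LQData


set_option maxHeartbeats 1000000 in
lemma msqrt_mul_self {d : ℕ} {X : Matrix (Fin d) (Fin d) ℝ} (h : X.PosSemidef) :
    msqrt X * msqrt X = X := by
  simp only [msqrt, dif_pos h]
  have hU : (star h.1.eigenvectorUnitary : Matrix (Fin d) (Fin d) ℝ) *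
      (h.1.eigenvectorUnitary : Matrix (Fin d) (Fin d) ℝ) = 1 := Unitary.coe_star_mul_self _
  have hs := h.1.spectral_theorem
  rw [Unitary.conjStarAlgAut_apply] at hs
  conv_rhs => rw [hs]
  simp only [Matrix.mul_assoc]
  rw [← Matrix.mul_assoc _ (h.1.eigenvectorUnitary : Matrix (Fin d) (Fin d) ℝ), hU,
    Matrix.one_mul, ← Matrix.mul_assoc (diagonal _), diagonal_mul_diagonal]
  congr 3
  funext i
  simp [Real.mul_self_sqrt (h.eigenvalues_nonneg i)]

set_option maxHeartbeats 1000000 in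
lemma key_identity' {n m : ℕ} (B : Matrix (Fin n) (Fin m) ℝ) (R : Matrix (Fin m) (Fin m) ℝ)
    (Y S : Matrix (Fin n) (Fin n) ℝ) (hSS : S * S = Y)
    (K : Matrix (Fin m) (Fin m) ℝ) (hKdef : K = R + Bᵀ * Y * B)
    (hRR : R⁻¹ * R = 1) (hKK : K * K⁻¹ = 1) :
    S * (1 + S * B * R⁻¹ * Bᵀ * S)⁻¹ * S = Y - Y * B * K⁻¹ * Bᵀ * Y := by
  have hinner : R⁻¹ - K⁻¹ - R⁻¹ * (Bᵀ * Y * B) * K⁻¹ = 0 := by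
    have hBYBK : Bᵀ * Y * B = K - R := by rw [hKdef]; noncomm_ring
    rw [hBYBK, Matrix.mul_sub, Matrix.sub_mul, Matrix.mul_assoc, hKK, Matrix.mul_one,
      Matrix.mul_assoc R⁻¹ R K⁻¹,
      show R⁻¹ * (R * K⁻¹) = (R⁻¹ * R) * K⁻¹ by rw [Matrix.mul_assoc], hRR, Matrix.one_mul]
    abel
  have hM : (1 + S * B * R⁻¹ * Bᵀ * S) * (1 - S * B * K⁻¹ * Bᵀ * S) = 1 := by
    have expand : (1 + S * B * R⁻¹ * Bᵀ * S) * (1 - S * B * K⁻¹ * Bᵀ * S)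
        = 1 + S * B * (R⁻¹ - K⁻¹ - R⁻¹ * (Bᵀ * (S * S) * B) * K⁻¹) * Bᵀ * S := by
      simp only [Matrix.mul_sub, Matrix.sub_mul, Matrix.mul_add, Matrix.add_mul,
        Matrix.mul_one, Matrix.one_mul, Matrix.mul_assoc]
      abel
    rw [expand, hSS, hinner]
    simp
  rw [inv_eq_right_inv hM]
  have h2 : S * (1 - S * B * K⁻¹ * Bᵀ * S) * S = (S*S) - (S*S) * B * K⁻¹ * Bᵀ * (S*S) := by
    simp only [Matrix.mul_sub, Matrix.sub_mul, Matrix.mul_add, Matrix.add_mul,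
      Matrix.mul_one, Matrix.one_mul, Matrix.mul_assoc]
  rw [h2, hSS]

set_option maxHeartbeats 1000000 in
lemma main_identity {n m : ℕ} (B : Matrix (Fin n) (Fin m) ℝ) (R : Matrix (Fin m) (Fin m) ℝ)
    (Y₁ Y₂ : Matrix (Fin n) (Fin n) ℝ)
    (K₁ K₂ L₁ L₂ : Matrix (Fin m) (Fin m) ℝ)
    (hK1 : K₁ = R + Bᵀ * Y₁ * B) (hK2 : K₂ = R + Bᵀ * Y₂ * B)
    (e1 : L₂ * K₂ = 1) (e2 : K₂ * L₂ = 1) (e4 : K₁ * L₁ = 1) :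
    (Y₁ - Y₁ * B * L₁ * Bᵀ * Y₁) - (Y₂ - Y₂ * B * L₂ * Bᵀ * Y₂)
      = (1 - Y₁ * B * L₁ * Bᵀ) * (Y₁ - Y₂) * (1 - B * (L₁ * (Bᵀ * Y₁)))
        + (Y₂ * B * L₂ - Y₁ * B * L₁) * K₂ * (L₂ * (Bᵀ * Y₂) - L₁ * (Bᵀ * Y₁)) := by
  have hdiff : Bᵀ * (Y₁ - Y₂) * B = K₁ - K₂ := by
    rw [hK1, hK2]
    simp only [Matrix.mul_sub, Matrix.sub_mul]
    abel
  have hX : L₂ * (Bᵀ * (Y₁ - Y₂) * B) * L₁ = L₂ - L₁ := by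
    rw [hdiff]
    calc L₂ * (K₁ - K₂) * L₁ = L₂ * (K₁ * L₁) - L₂ * K₂ * L₁ := by
          simp only [Matrix.mul_sub, Matrix.sub_mul, Matrix.mul_assoc]
      _ = L₂ - L₁ := by rw [e4, e1, Matrix.mul_one, Matrix.one_mul]
  have hK2' : K₂ = K₁ + Bᵀ * (Y₂ - Y₁) * B := by
    rw [hK1, hK2]
    simp only [Matrix.mul_sub, Matrix.sub_mul]
    abel
  have hK2W : K₂ * (L₂ * (Bᵀ * Y₂) - L₁ * (Bᵀ * Y₁))
      = Bᵀ * (Y₁ - Y₂) * (B * (L₁ * (Bᵀ * Y₁)) - 1) := by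
    have step1 : K₂ * (L₂ * (Bᵀ * Y₂) - L₁ * (Bᵀ * Y₁))
        = (K₂ * L₂) * (Bᵀ * Y₂) - (K₂ * L₁) * (Bᵀ * Y₁) := by
      simp only [Matrix.mul_sub, Matrix.mul_assoc]
    have step2 : K₂ * L₁ = 1 + Bᵀ * (Y₂ - Y₁) * B * L₁ := by
      rw [hK2', Matrix.add_mul, e4]
    rw [step1, e2, step2, Matrix.one_mul]
    simp only [Matrix.mul_sub, Matrix.sub_mul, Matrix.mul_one, Matrix.one_mul,
      Matrix.add_mul, Matrix.mul_add, Matrix.mul_assoc]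
    abel
  rw [Matrix.mul_assoc _ K₂ _, hK2W]
  have poly : (1 - Y₁ * B * L₁ * Bᵀ) * (Y₁ - Y₂) * (1 - B * (L₁ * (Bᵀ * Y₁)))
        + (Y₂ * B * L₂ - Y₁ * B * L₁) * (Bᵀ * (Y₁ - Y₂) * (B * (L₁ * (Bᵀ * Y₁)) - 1))
      = ((Y₁ - Y₁ * B * L₁ * Bᵀ * Y₁) - (Y₂ - Y₂ * B * L₂ * Bᵀ * Y₂))
        + Y₂ * B * (L₂ * (Bᵀ * (Y₁ - Y₂) * B) * L₁ - (L₂ - L₁)) * (Bᵀ * Y₁) := by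
    simp only [Matrix.mul_sub, Matrix.sub_mul, Matrix.mul_add, Matrix.add_mul,
      Matrix.mul_one, Matrix.one_mul, Matrix.mul_assoc]
    abel
  rw [poly, hX, sub_self]
  simp

theorem fmap_monotone {n m : ℕ} (hn : 1 ≤ n) (hm : 1 ≤ m)
    (B : Matrix (Fin n) (Fin m) ℝ) (R : Matrix (Fin m) (Fin m) ℝ) (hR : R.PosDef)
    (Y₁ Y₂ : Matrix (Fin n) (Fin n) ℝ) (hY₁ : Y₁.PosSemidef) (hY₂ : Y₂.PosSemidef)
    (h : (Y₁ - Y₂).PosSemidef) :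
    (msqrt Y₁ * (1 + msqrt Y₁ * B * R⁻¹ * Bᵀ * msqrt Y₁)⁻¹ * msqrt Y₁ -
      msqrt Y₂ * (1 + msqrt Y₂ * B * R⁻¹ * Bᵀ * msqrt Y₂)⁻¹ * msqrt Y₂).PosSemidef := by
  have hRR : R⁻¹ * R = 1 :=
    Matrix.nonsing_inv_mul _ ((Matrix.isUnit_iff_isUnit_det _).1 hR.isUnit)
  have hBYB₁ : (Bᵀ * Y₁ * B).PosSemidef := by
    have := hY₁.conjTranspose_mul_mul_same B
    rwa [conjTranspose_eq_transpose_of_trivial] at this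
  have hBYB₂ : (Bᵀ * Y₂ * B).PosSemidef := by
    have := hY₂.conjTranspose_mul_mul_same B
    rwa [conjTranspose_eq_transpose_of_trivial] at this
  have hK₁ : (R + Bᵀ * Y₁ * B).PosDef := hR.add_posSemidef hBYB₁
  have hK₂ : (R + Bᵀ * Y₂ * B).PosDef := hR.add_posSemidef hBYB₂
  have hKK₁ : (R + Bᵀ * Y₁ * B) * (R + Bᵀ * Y₁ * B)⁻¹ = 1 :=
    Matrix.mul_nonsing_inv _ ((Matrix.isUnit_iff_isUnit_det _).1 hK₁.isUnit)
  have hKK₁' : (R + Bᵀ * Y₁ * B)⁻¹ * (R + Bᵀ * Y₁ * B) = 1 :=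
    Matrix.nonsing_inv_mul _ ((Matrix.isUnit_iff_isUnit_det _).1 hK₁.isUnit)
  have hKK₂ : (R + Bᵀ * Y₂ * B) * (R + Bᵀ * Y₂ * B)⁻¹ = 1 :=
    Matrix.mul_nonsing_inv _ ((Matrix.isUnit_iff_isUnit_det _).1 hK₂.isUnit)
  have hKK₂' : (R + Bᵀ * Y₂ * B)⁻¹ * (R + Bᵀ * Y₂ * B) = 1 :=
    Matrix.nonsing_inv_mul _ ((Matrix.isUnit_iff_isUnit_det _).1 hK₂.isUnit)
  rw [key_identity' B R Y₁ (msqrt Y₁) (msqrt_mul_self hY₁) _ rfl hRR hKK₁,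
    key_identity' B R Y₂ (msqrt Y₂) (msqrt_mul_self hY₂) _ rfl hRR hKK₂,
    main_identity B R Y₁ Y₂ _ _ _ _ rfl rfl hKK₂' hKK₂ hKK₁]
  -- transpose facts
  have hY₁t : Y₁ᵀ = Y₁ := by
    rw [← conjTranspose_eq_transpose_of_trivial]; exact hY₁.isHermitian
  have hY₂t : Y₂ᵀ = Y₂ := by
    rw [← conjTranspose_eq_transpose_of_trivial]; exact hY₂.isHermitian
  have hL₁t : ((R + Bᵀ * Y₁ * B)⁻¹)ᵀ = (R + Bᵀ * Y₁ * B)⁻¹ := by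
    rw [Matrix.transpose_nonsing_inv]
    congr 1
    rw [← conjTranspose_eq_transpose_of_trivial]; exact hK₁.isHermitian
  have hL₂t : ((R + Bᵀ * Y₂ * B)⁻¹)ᵀ = (R + Bᵀ * Y₂ * B)⁻¹ := by
    rw [Matrix.transpose_nonsing_inv]
    congr 1
    rw [← conjTranspose_eq_transpose_of_trivial]; exact hK₂.isHermitian
  have hE : (1 - B * ((R + Bᵀ * Y₁ * B)⁻¹ * (Bᵀ * Y₁)))ᵀ
      = 1 - Y₁ * B * (R + Bᵀ * Y₁ * B)⁻¹ * Bᵀ := by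
    simp only [Matrix.transpose_sub, Matrix.transpose_one, Matrix.transpose_mul,
      Matrix.transpose_transpose, hY₁t, hL₁t]
  have hW : ((R + Bᵀ * Y₂ * B)⁻¹ * (Bᵀ * Y₂) - (R + Bᵀ * Y₁ * B)⁻¹ * (Bᵀ * Y₁))ᵀ
      = Y₂ * B * (R + Bᵀ * Y₂ * B)⁻¹ - Y₁ * B * (R + Bᵀ * Y₁ * B)⁻¹ := by
    simp only [Matrix.transpose_sub, Matrix.transpose_mul, Matrix.transpose_transpose,
      hY₁t, hY₂t, hL₁t, hL₂t]
  have t1 : ((1 - Y₁ * B * (R + Bᵀ * Y₁ * B)⁻¹ * Bᵀ) * (Y₁ - Y₂) *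
      (1 - B * ((R + Bᵀ * Y₁ * B)⁻¹ * (Bᵀ * Y₁)))).PosSemidef := by
    have := h.conjTranspose_mul_mul_same (1 - B * ((R + Bᵀ * Y₁ * B)⁻¹ * (Bᵀ * Y₁)))
    rwa [conjTranspose_eq_transpose_of_trivial, hE] at this
  have t2 : ((Y₂ * B * (R + Bᵀ * Y₂ * B)⁻¹ - Y₁ * B * (R + Bᵀ * Y₁ * B)⁻¹) *
      (R + Bᵀ * Y₂ * B) *
      ((R + Bᵀ * Y₂ * B)⁻¹ * (Bᵀ * Y₂) - (R + Bᵀ * Y₁ * B)⁻¹ * (Bᵀ * Y₁))).PosSemidef := by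
    have := hK₂.posSemidef.conjTranspose_mul_mul_same
      ((R + Bᵀ * Y₂ * B)⁻¹ * (Bᵀ * Y₂) - (R + Bᵀ * Y₁ * B)⁻¹ * (Bᵀ * Y₁))
    rwa [conjTranspose_eq_transpose_of_trivial, hW] at this
  exact t1.add t2
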